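/- Lemma 8.1 (pointwise monotonicity inequality): Let m ≥ 1, let ε ≥ 0, and let A, B ∈ ℝ^m. Set α = √(ε² + |A|²) and β = √(ε² + |B|²), and assume α > 0 and β > 0. Then (A/α − B/β)·(A − B) ≥ ((α + β)/2)·|A/α − B/β|². Moreover, if ε = 0 then equality holds, and if ε > 0 then (A/α − B/β)·(A − B) = 0 if and only if A = B. (Applied pointwise with A = ∇u + F⃗ and B = ∇v + F⃗, this gives: (N_ε(u) − N_ε(v))·(∇u − ∇v) ≥ ((α+β)/2)|N_ε(u) − N_ε(v)|², where N_ε(w) = (∇w + F⃗)/√(ε² + |∇w + F⃗|²).) -/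
import Mathlib


open scoped RealInnerProductSpace

/-- **Lemma 8.1** (pointwise monotonicity inequality): for `A, B ∈ ℝ^m`, `ε ≥ 0`,
`α = √(ε² + |A|²) > 0`, `β = √(ε² + |B|²) > 0`, one has
`(A/α − B/β)·(A − B) ≥ ((α+β)/2)|A/α − B/β|²`; equality holds when `ε = 0`, and for
`ε > 0` the left side vanishes if and only if `A = B`. -/
theorem pointwise_monotonicity {m : ℕ} (hm : 1 ≤ m) (ε : ℝ) (hε : 0 ≤ ε)
    (A B : EuclideanSpace ℝ (Fin m)) (α β : ℝ)
    (hα : α = Real.sqrt (ε ^ 2 + ‖A‖ ^ 2)) (hβ : β = Real.sqrt (ε ^ 2 + ‖B‖ ^ 2))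
    (hα0 : 0 < α) (hβ0 : 0 < β) :
    ((α + β) / 2) * ‖α⁻¹ • A - β⁻¹ • B‖ ^ 2 ≤ ⟪α⁻¹ • A - β⁻¹ • B, A - B⟫ ∧
    (ε = 0 → ⟪α⁻¹ • A - β⁻¹ • B, A - B⟫ = ((α + β) / 2) * ‖α⁻¹ • A - β⁻¹ • B‖ ^ 2) ∧
    (0 < ε → (⟪α⁻¹ • A - β⁻¹ • B, A - B⟫ = 0 ↔ A = B)) := by
  have hα2 : α ^ 2 = ε ^ 2 + ‖A‖ ^ 2 := by
    rw [hα]; exact Real.sq_sqrt (by positivity)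
  have hβ2 : β ^ 2 = ε ^ 2 + ‖B‖ ^ 2 := by
    rw [hβ]; exact Real.sq_sqrt (by positivity)
  have hαne : α ≠ 0 := ne_of_gt hα0
  have hβne : β ≠ 0 := ne_of_gt hβ0
  have hnorm : ‖α⁻¹ • A - β⁻¹ • B‖ ^ 2
      = α⁻¹ ^ 2 * ‖A‖ ^ 2 - 2 * (α⁻¹ * β⁻¹) * ⟪A, B⟫ + β⁻¹ ^ 2 * ‖B‖ ^ 2 := by
    rw [norm_sub_sq_real, real_inner_smul_left, real_inner_smul_right,
      norm_smul, norm_smul]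
    simp [Real.norm_eq_abs, abs_of_pos (inv_pos.mpr hα0), abs_of_pos (inv_pos.mpr hβ0),
      mul_pow]
    ring
  have hinner : ⟪α⁻¹ • A - β⁻¹ • B, A - B⟫
      = α⁻¹ * ‖A‖ ^ 2 - (α⁻¹ + β⁻¹) * ⟪A, B⟫ + β⁻¹ * ‖B‖ ^ 2 := by
    rw [inner_sub_left, inner_sub_right, inner_sub_right, real_inner_smul_left,
      real_inner_smul_left, real_inner_smul_left, real_inner_smul_left,
      real_inner_self_eq_norm_sq, real_inner_self_eq_norm_sq, real_inner_comm B A]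
    ring
  have hA2 : ‖A‖ ^ 2 = α ^ 2 - ε ^ 2 := by linarith
  have hB2 : ‖B‖ ^ 2 = β ^ 2 - ε ^ 2 := by linarith
  have key : ⟪α⁻¹ • A - β⁻¹ • B, A - B⟫
      = ((α + β) / 2) * ‖α⁻¹ • A - β⁻¹ • B‖ ^ 2
        + ε ^ 2 * (α - β) ^ 2 * (α + β) / (2 * α ^ 2 * β ^ 2) := by
    rw [hinner, hnorm, hA2, hB2]
    field_simp
    ring
  have hrest : 0 ≤ ε ^ 2 * (α - β) ^ 2 * (α + β) / (2 * α ^ 2 * β ^ 2) := by positivity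
  refine ⟨by linarith, ?_, ?_⟩
  · intro h0
    rw [key, h0]
    ring
  · intro hεpos
    constructor
    · intro h0
      have hn2 : 0 ≤ ((α + β) / 2) * ‖α⁻¹ • A - β⁻¹ • B‖ ^ 2 := by positivity
      have h1 : ((α + β) / 2) * ‖α⁻¹ • A - β⁻¹ • B‖ ^ 2 = 0 := by linarith [key ▸ h0]
      have h2 : ε ^ 2 * (α - β) ^ 2 * (α + β) / (2 * α ^ 2 * β ^ 2) = 0 := by
        linarith [key ▸ h0]
      have hαβ : α = β := by
        have h3 : (α - β) ^ 2 = 0 := by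
          by_contra hne
          have : 0 < (α - β) ^ 2 := lt_of_le_of_ne (sq_nonneg _) (Ne.symm hne)
          have : 0 < ε ^ 2 * (α - β) ^ 2 * (α + β) / (2 * α ^ 2 * β ^ 2) := by positivity
          linarith
        have := pow_eq_zero_iff (n := 2) (by norm_num) |>.mp h3
        linarith
      have hP : ‖α⁻¹ • A - β⁻¹ • B‖ ^ 2 = 0 := by
        have : (α + β) / 2 ≠ 0 := by positivity
        exact (mul_eq_zero.mp h1).resolve_left this
      have hP0 : α⁻¹ • A - β⁻¹ • B = 0 := by
        rwa [pow_eq_zero_iff (n := 2) (by norm_num), norm_eq_zero] at hP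
      have : α⁻¹ • A = β⁻¹ • B := sub_eq_zero.mp hP0
      rw [hαβ] at this
      exact smul_right_injective _ (inv_ne_zero hβne) this
    · intro hAB
      have hαβ : α = β := by rw [hα, hβ, hAB]
      rw [hAB, hαβ, sub_self]
      exact inner_zero_left _
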